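/- arXiv:1003.2930 — 3 statements merged into one kernel-verified Lean document; each statement's English description precedes it below -/
import Mathlib

section
/- Semicontinuity of the intervention operator: let T > 0 and let u : [0,T] × Ō → ℝ be such that (t,x,y) ↦ u(t,x,y,z) is continuous for each z ∈ K. Then for each z ∈ K: (i) the map (t,x,y) ↦ (Su)(t,x,y,z), with values in ℝ ∪ {−∞}, is upper semicontinuous on {(t,x,y) : (t,x,y,z) ∈ [0,T] × Ō}; (ii) for each fixed y (with (x,y,z) ∈ Ō), the map (t,x) ↦ (Su)(t,x,y,z) is continuous on its domain. -/
open scoped Classical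

/-- The set of admissible stock positions `K = {-C₂, …, C₃}`. -/
noncomputable def Kset (C₂ C₃ : ℕ) : Finset ℤ := Finset.Icc (-(C₂ : ℤ)) (C₃ : ℤ)

/-- The set of admissible post-transaction positions
`Γ(y,z) = {z̃ ∈ K : z̃ ≠ z, c(z̃ - z) + c(-z̃) ≤ y}`. -/
noncomputable def Gamma (C₂ C₃ : ℕ) (c : ℤ → ℝ) (y : ℝ) (z : ℤ) : Finset ℤ :=
  (Kset C₂ C₃).filter fun z' => z' ≠ z ∧ c (z' - z) + c (-z') ≤ y

/-- The closed solvency region `Ō = {(x,y,z) : x ≥ 0, y ≥ c(-z), z ∈ K}`. -/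
def Obar (C₂ C₃ : ℕ) (c : ℤ → ℝ) : Set (ℝ × ℝ × ℤ) :=
  {p | 0 ≤ p.1 ∧ c (-p.2.2) ≤ p.2.1 ∧ p.2.2 ∈ Kset C₂ C₃}

/-- The intervention operator with values in `ℝ ∪ {-∞} ⊆ EReal`:
`(Su)(t,x,y,z) = max_{z̃ ∈ Γ(y,z)} u(t, x, y - c(z̃ - z), z̃)`, `-∞` if `Γ(y,z) = ∅`. -/
noncomputable def SopE (C₂ C₃ : ℕ) (c : ℤ → ℝ) (u : ℝ → ℝ → ℝ → ℤ → ℝ)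
    (t x y : ℝ) (z : ℤ) : EReal :=
  (Gamma C₂ C₃ c y z).sup fun z' => ((u t x (y - c (z' - z)) z' : ℝ) : EReal)


private lemma finsetSup_continuousOn {α : Type*} [TopologicalSpace α] (s : Finset ℤ)
    (f : ℤ → α → EReal) (S : Set α) (hf : ∀ i ∈ s, ContinuousOn (f i) S) :
    ContinuousOn (fun x => s.sup (fun i => f i x)) S := by
  induction s using Finset.induction with
  | empty => simpa using continuousOn_const
  | insert a s hns ih =>
      simp only [Finset.sup_insert]
      exact (hf a (Finset.mem_insert_self a s)).sup
        (ih fun i hi => hf i (Finset.mem_insert_of_mem hi))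

/-- Semicontinuity of the intervention operator: if `u(·,·,·,z)` is continuous for every
`z ∈ K`, then (i) `(t,x,y) ↦ (Su)(t,x,y,z)` is upper semicontinuous on
`{(t,x,y) : (t,x,y,z) ∈ [0,T] × Ō}`, and (ii) for each fixed admissible `y`,
`(t,x) ↦ (Su)(t,x,y,z)` is continuous on its domain `[0,T] × [0,∞)`. -/
theorem Sop_semicontinuous (C₂ C₃ : ℕ) (hC₂ : 0 < C₂) (hC₃ : 0 < C₃)
    (c : ℤ → ℝ) (hc0 : c 0 = 0) (hcpos : ∀ z : ℤ, z ≠ 0 → 0 < c z)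
    (T : ℝ) (hT : 0 < T)
    (u : ℝ → ℝ → ℝ → ℤ → ℝ)
    (hucont : ∀ z ∈ Kset C₂ C₃, ContinuousOn (fun p : ℝ × ℝ × ℝ => u p.1 p.2.1 p.2.2 z)
      {p : ℝ × ℝ × ℝ | p.1 ∈ Set.Icc 0 T ∧ (p.2.1, p.2.2, z) ∈ Obar C₂ C₃ c})
    (z : ℤ) (hz : z ∈ Kset C₂ C₃) :
    UpperSemicontinuousOn (fun p : ℝ × ℝ × ℝ => SopE C₂ C₃ c u p.1 p.2.1 p.2.2 z)
      {p : ℝ × ℝ × ℝ | p.1 ∈ Set.Icc 0 T ∧ (p.2.1, p.2.2, z) ∈ Obar C₂ C₃ c} ∧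
    ∀ y : ℝ, c (-z) ≤ y →
      ContinuousOn (fun q : ℝ × ℝ => SopE C₂ C₃ c u q.1 q.2 y z)
        (Set.Icc 0 T ×ˢ Set.Ici (0 : ℝ)) := by
  have hGam : ∀ (y : ℝ) (z' : ℤ), z' ∈ Gamma C₂ C₃ c y z →
      z' ∈ Kset C₂ C₃ ∧ z' ≠ z ∧ c (z' - z) + c (-z') ≤ y := by
    intro y z' h
    simpa [Gamma, Finset.mem_filter] using h
  constructor
  · -- upper semicontinuity
    intro p₀ hp₀ b hb
    set y₀ := p₀.2.2 with hy₀
    -- choose δ > 0 so that values > y₀ are ≥ y₀ + δ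
    set B : Finset ℤ := (Kset C₂ C₃).filter (fun z' => y₀ < c (z' - z) + c (-z')) with hB
    have hδ : ∃ δ : ℝ, 0 < δ ∧ ∀ z' ∈ Kset C₂ C₃,
        c (z' - z) + c (-z') ≤ y₀ ∨ y₀ + δ ≤ c (z' - z) + c (-z') := by
      rcases B.eq_empty_or_nonempty with hBe | hBne
      · refine ⟨1, one_pos, fun z' hz' => Or.inl ?_⟩
        by_contra h
        have : z' ∈ B := by
          simp only [hB, Finset.mem_filter]
          exact ⟨hz', lt_of_not_ge h⟩
        simp [hBe] at this
      · refine ⟨B.inf' hBne (fun z' => c (z' - z) + c (-z') - y₀), ?_, ?_⟩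
        · rw [Finset.lt_inf'_iff]
          intro z' hz'
          have := (Finset.mem_filter.mp hz').2
          linarith
        · intro z' hz'
          by_cases h : c (z' - z) + c (-z') ≤ y₀
          · exact Or.inl h
          · refine Or.inr ?_
            have hmem : z' ∈ B := Finset.mem_filter.mpr ⟨hz', lt_of_not_ge h⟩
            have := Finset.inf'_le (fun z' => c (z' - z) + c (-z') - y₀) hmem
            linarith
    obtain ⟨δ, hδpos, hδprop⟩ := hδ
    have hsub : ∀ y' : ℝ, y' < y₀ + δ → Gamma C₂ C₃ c y' z ⊆ Gamma C₂ C₃ c y₀ z := by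
      intro y' hy' z' hz'
      obtain ⟨hzK, hzne, hle⟩ := hGam y' z' hz'
      rcases hδprop z' hzK with h | h
      · exact Finset.mem_filter.mpr ⟨hzK, hzne, h⟩
      · linarith
    -- the set S
    set S : Set (ℝ × ℝ × ℝ) :=
      {p : ℝ × ℝ × ℝ | p.1 ∈ Set.Icc 0 T ∧ (p.2.1, p.2.2, z) ∈ Obar C₂ C₃ c} with hS
    have hbbot : (⊥ : EReal) < b := lt_of_le_of_lt bot_le hb
    -- for each z' in Γ(y₀), eventual bound on the corresponding branch
    have hbranch : ∀ z' ∈ Gamma C₂ C₃ c y₀ z,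
        ∀ᶠ p in nhdsWithin p₀ S, c (z' - z) + c (-z') ≤ p.2.2 →
          ((u p.1 p.2.1 (p.2.2 - c (z' - z)) z' : ℝ) : EReal) < b := by
      intro z' hz'
      obtain ⟨hzK, hzne, hle⟩ := hGam y₀ z' hz'
      set A : Set (ℝ × ℝ × ℝ) := {p : ℝ × ℝ × ℝ | c (z' - z) + c (-z') ≤ p.2.2} with hA
      have hφ : Continuous (fun p : ℝ × ℝ × ℝ => (p.1, p.2.1, p.2.2 - c (z' - z))) := by
        fun_prop
      have hmaps : Set.MapsTo (fun p : ℝ × ℝ × ℝ => (p.1, p.2.1, p.2.2 - c (z' - z)))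
          (S ∩ A)
          {p : ℝ × ℝ × ℝ | p.1 ∈ Set.Icc 0 T ∧ (p.2.1, p.2.2, z') ∈ Obar C₂ C₃ c} := by
        rintro p ⟨⟨hpt, hpx, _, hpz⟩, hpA⟩
        refine ⟨hpt, hpx, ?_, hzK⟩
        simp only [hA, Set.mem_setOf_eq] at hpA
        dsimp only
        linarith
      have hcont : ContinuousWithinAt
          (fun p : ℝ × ℝ × ℝ => ((u p.1 p.2.1 (p.2.2 - c (z' - z)) z' : ℝ) : EReal))
          (S ∩ A) p₀ := by
        have h1 : ContinuousOn
            (fun p : ℝ × ℝ × ℝ => u p.1 p.2.1 (p.2.2 - c (z' - z)) z') (S ∩ A) :=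
          (hucont z' hzK).comp hφ.continuousOn hmaps
        have hp₀mem : p₀ ∈ S ∩ A := ⟨hp₀, by simpa [hA] using hle⟩
        exact continuous_coe_real_ereal.continuousAt.comp_continuousWithinAt (h1 p₀ hp₀mem)
      have hval : ((u p₀.1 p₀.2.1 (p₀.2.2 - c (z' - z)) z' : ℝ) : EReal) < b := by
        refine lt_of_le_of_lt ?_ hb
        exact Finset.le_sup (f := fun z' => ((u p₀.1 p₀.2.1 (p₀.2.2 - c (z' - z)) z' : ℝ) : EReal)) hz'
      have hev : ∀ᶠ p in nhdsWithin p₀ (S ∩ A),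
          ((u p.1 p.2.1 (p.2.2 - c (z' - z)) z' : ℝ) : EReal) < b :=
        hcont.eventually_lt_const hval
      rw [nhdsWithin_inter' p₀ S A, Filter.eventually_inf_principal] at hev
      exact hev
    have hall : ∀ᶠ p in nhdsWithin p₀ S, ∀ z' ∈ Gamma C₂ C₃ c y₀ z,
        c (z' - z) + c (-z') ≤ p.2.2 →
          ((u p.1 p.2.1 (p.2.2 - c (z' - z)) z' : ℝ) : EReal) < b :=
      (Filter.eventually_all_finset _).mpr hbranch
    have hyev : ∀ᶠ p in nhdsWithin p₀ S, p.2.2 < y₀ + δ := by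
      have hcy : ContinuousWithinAt (fun p : ℝ × ℝ × ℝ => p.2.2) S p₀ :=
        (continuous_snd.comp continuous_snd).continuousWithinAt
      exact hcy.eventually_lt_const (by linarith)
    filter_upwards [hall, hyev] with p hp hpy
    rw [SopE, Finset.sup_lt_iff hbbot]
    intro z' hz'
    have hsubp := hsub p.2.2 hpy hz'
    obtain ⟨hzK, hzne, hle⟩ := hGam p.2.2 z' hz'
    exact hp z' hsubp hle
  · -- continuity for fixed y
    intro y hy
    have : (fun q : ℝ × ℝ => SopE C₂ C₃ c u q.1 q.2 y z)
        = fun q : ℝ × ℝ => (Gamma C₂ C₃ c y z).sup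
            (fun z' => ((u q.1 q.2 (y - c (z' - z)) z' : ℝ) : EReal)) := rfl
    rw [this]
    apply finsetSup_continuousOn
    intro z' hz'
    obtain ⟨hzK, hzne, hle⟩ := hGam y z' hz'
    have hφ : Continuous (fun q : ℝ × ℝ => (q.1, q.2, y - c (z' - z)) : ℝ × ℝ → ℝ × ℝ × ℝ) := by
      fun_prop
    have hmaps : Set.MapsTo (fun q : ℝ × ℝ => ((q.1, q.2, y - c (z' - z)) : ℝ × ℝ × ℝ))
        (Set.Icc 0 T ×ˢ Set.Ici (0 : ℝ))
        {p : ℝ × ℝ × ℝ | p.1 ∈ Set.Icc 0 T ∧ (p.2.1, p.2.2, z') ∈ Obar C₂ C₃ c} := by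
      rintro q ⟨hq1, hq2⟩
      refine ⟨hq1, hq2, ?_, hzK⟩
      dsimp only
      linarith
    exact continuous_coe_real_ereal.comp_continuousOn
      (((hucont z' hzK).comp hφ.continuousOn hmaps))
end

section
/- Openness of the no-action region: let T > 0 and let u : [0,T] × Ō → ℝ be such that (t,x,y) ↦ u(t,x,y,z) is continuous for each z ∈ K. Then for each z ∈ K, the no-action region A[u](z) = {(t,x,y) : t ∈ (0,T), (x,y,z) ∈ O, and u(t,x,y,z) > (Su)(t,x,y,z)} is an open subset of ℝ³ (points where Γ(y,z) = ∅ belong to A[u](z) by the convention Su = −∞ there). -/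
open scoped Classical

open Topology Filter

/-- Openness of the no-action region: if `u(·,·,·,z)` is continuous for each `z ∈ K`,
then `A[u](z) = {(t,x,y) : t ∈ (0,T), (x,y,z) ∈ O, u(t,x,y,z) > (Su)(t,x,y,z)}`
is an open subset of `ℝ³` (points with `Γ(y,z) = ∅` belong to it since `Su = -∞` there). -/
theorem no_action_region_isOpen (C₂ C₃ : ℕ) (hC₂ : 0 < C₂) (hC₃ : 0 < C₃)
    (c : ℤ → ℝ) (hc0 : c 0 = 0) (hcpos : ∀ z : ℤ, z ≠ 0 → 0 < c z)
    (T : ℝ) (hT : 0 < T)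
    (u : ℝ → ℝ → ℝ → ℤ → ℝ)
    (hucont : ∀ z ∈ Kset C₂ C₃, ContinuousOn (fun p : ℝ × ℝ × ℝ => u p.1 p.2.1 p.2.2 z)
      {p : ℝ × ℝ × ℝ | p.1 ∈ Set.Icc 0 T ∧ (p.2.1, p.2.2, z) ∈ Obar C₂ C₃ c})
    (z : ℤ) (hz : z ∈ Kset C₂ C₃) :
    IsOpen {p : ℝ × ℝ × ℝ | p.1 ∈ Set.Ioo 0 T ∧ 0 < p.2.1 ∧ c (-z) < p.2.2 ∧
      SopE C₂ C₃ c u p.1 p.2.1 p.2.2 z < ((u p.1 p.2.1 p.2.2 z : ℝ) : EReal)} := by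
  rw [isOpen_iff_mem_nhds]
  rintro ⟨t₀, x₀, y₀⟩ ⟨⟨ht0, htT⟩, hx, hy, hSu⟩
  set S : Finset ℤ := Gamma C₂ C₃ c y₀ z with hSdef
  set M : ℝ := u t₀ x₀ y₀ z with hMdef
  -- continuity within the (preimage of the) domain, for each relevant z'
  have key : ∀ z' ∈ Kset C₂ C₃, c (z' - z) + c (-z') ≤ y₀ →
      ContinuousWithinAt (fun p : ℝ × ℝ × ℝ => u p.1 p.2.1 (p.2.2 - c (z' - z)) z')
        {p : ℝ × ℝ × ℝ | p.1 ∈ Set.Icc 0 T ∧ 0 ≤ p.2.1 ∧ c (-z') ≤ p.2.2 - c (z' - z)}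
        (t₀, x₀, y₀) := by
    intro z' hz' hcost
    have hφ : Continuous (fun p : ℝ × ℝ × ℝ => (p.1, p.2.1, p.2.2 - c (z' - z))) := by
      fun_prop
    have hqmem : ((t₀, x₀, y₀ - c (z' - z)) : ℝ × ℝ × ℝ) ∈
        {p : ℝ × ℝ × ℝ | p.1 ∈ Set.Icc 0 T ∧ (p.2.1, p.2.2, z') ∈ Obar C₂ C₃ c} := by
      refine ⟨⟨le_of_lt ht0, le_of_lt htT⟩, le_of_lt hx, by dsimp; linarith, hz'⟩
    have hcw := (hucont z' hz').continuousWithinAt hqmem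
    have hmaps : Set.MapsTo (fun p : ℝ × ℝ × ℝ => (p.1, p.2.1, p.2.2 - c (z' - z)))
        {p : ℝ × ℝ × ℝ | p.1 ∈ Set.Icc 0 T ∧ 0 ≤ p.2.1 ∧ c (-z') ≤ p.2.2 - c (z' - z)}
        {p : ℝ × ℝ × ℝ | p.1 ∈ Set.Icc 0 T ∧ (p.2.1, p.2.2, z') ∈ Obar C₂ C₃ c} :=
      fun p hp => ⟨hp.1, hp.2.1, hp.2.2, hz'⟩
    have hcomp : ContinuousWithinAt
        ((fun p : ℝ × ℝ × ℝ => u p.1 p.2.1 p.2.2 z') ∘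
          (fun p : ℝ × ℝ × ℝ => (p.1, p.2.1, p.2.2 - c (z' - z))))
        {p : ℝ × ℝ × ℝ | p.1 ∈ Set.Icc 0 T ∧ 0 ≤ p.2.1 ∧ c (-z') ≤ p.2.2 - c (z' - z)}
        (t₀, x₀, y₀) :=
      ContinuousWithinAt.comp
        (g := fun p : ℝ × ℝ × ℝ => u p.1 p.2.1 p.2.2 z')
        (f := fun p : ℝ × ℝ × ℝ => (p.1, p.2.1, p.2.2 - c (z' - z)))
        hcw hφ.continuousWithinAt hmaps
    exact hcomp
  -- each term of the sup at the base point is < M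
  have hrlt : ∀ z' ∈ S, u t₀ x₀ (y₀ - c (z' - z)) z' < M := by
    intro z' hz'
    have h1 : ((u t₀ x₀ (y₀ - c (z' - z)) z' : ℝ) : EReal) ≤
        S.sup (fun z'' => ((u t₀ x₀ (y₀ - c (z'' - z)) z'' : ℝ) : EReal)) :=
      Finset.le_sup (f := fun z'' => ((u t₀ x₀ (y₀ - c (z'' - z)) z'' : ℝ) : EReal)) hz'
    have hSu' : S.sup (fun z'' => ((u t₀ x₀ (y₀ - c (z'' - z)) z'' : ℝ) : EReal)) <
        ((u t₀ x₀ y₀ z : ℝ) : EReal) := hSu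
    have h2 := lt_of_le_of_lt h1 hSu'
    exact_mod_cast h2
  obtain ⟨r, hr1, hr2⟩ : ∃ r : ℝ, (∀ z' ∈ S, u t₀ x₀ (y₀ - c (z' - z)) z' ≤ r) ∧ r < M := by
    rcases S.eq_empty_or_nonempty with h | h
    · exact ⟨M - 1, by simp [h], by linarith⟩
    · refine ⟨S.sup' h (fun z' => u t₀ x₀ (y₀ - c (z' - z)) z'),
        fun z' hz' => Finset.le_sup' (f := fun z'' => u t₀ x₀ (y₀ - c (z'' - z)) z'') hz', ?_⟩
      exact (Finset.sup'_lt_iff h).2 (fun z' hz' => hrlt z' hz')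
  set θ : ℝ := (M + r) / 2 with hθdef
  have hθ1 : r < θ := by rw [hθdef]; linarith
  have hθ2 : θ < M := by rw [hθdef]; linarith
  -- y-component tendsto
  have hycont : Filter.Tendsto (fun p' : ℝ × ℝ × ℝ => p'.2.2) (𝓝 (t₀, x₀, y₀)) (𝓝 y₀) :=
    (continuous_snd.comp continuous_snd).tendsto _
  -- eventually Γ(y',z) ⊆ S
  have hGam : ∀ᶠ p' : ℝ × ℝ × ℝ in 𝓝 (t₀, x₀, y₀),
      ∀ z' ∈ Kset C₂ C₃, c (z' - z) + c (-z') ≤ p'.2.2 → c (z' - z) + c (-z') ≤ y₀ := by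
    rw [Filter.eventually_all_finset]
    intro z' _
    by_cases hc : c (z' - z) + c (-z') ≤ y₀
    · exact Filter.Eventually.of_forall fun _ _ => hc
    · push_neg at hc
      filter_upwards [hycont.eventually_lt_const hc] with p' hp' hle
      linarith
  -- eventually: each candidate value is < θ (within its domain)
  have hE : ∀ᶠ p' : ℝ × ℝ × ℝ in 𝓝 (t₀, x₀, y₀),
      ∀ z' ∈ S, (p'.1 ∈ Set.Icc 0 T ∧ 0 ≤ p'.2.1 ∧ c (-z') ≤ p'.2.2 - c (z' - z)) →
        u p'.1 p'.2.1 (p'.2.2 - c (z' - z)) z' < θ := by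
    rw [Filter.eventually_all_finset]
    intro z' hz'
    have hmemK : z' ∈ Kset C₂ C₃ := (Finset.mem_filter.1 hz').1
    obtain ⟨_, hcost⟩ := (Finset.mem_filter.1 hz').2
    have hcw := key z' hmemK hcost
    have hval : u t₀ x₀ (y₀ - c (z' - z)) z' < θ := lt_of_le_of_lt (hr1 z' hz') hθ1
    have hev := hcw.eventually_lt_const hval
    exact eventually_nhdsWithin_iff.1 hev
  -- eventually: u at p' (with z) is > θ
  have hEz : ∀ᶠ p' : ℝ × ℝ × ℝ in 𝓝 (t₀, x₀, y₀),
      (p'.1 ∈ Set.Icc 0 T ∧ 0 ≤ p'.2.1 ∧ c (-z) ≤ p'.2.2) →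
        θ < u p'.1 p'.2.1 p'.2.2 z := by
    have hcostz : c (z - z) + c (-z) ≤ y₀ := by
      rw [sub_self, hc0]; linarith
    have hcw := key z hz hcostz
    simp only [sub_self, hc0, sub_zero] at hcw
    have hval : θ < u t₀ x₀ y₀ z := hθ2
    have hev := hcw.eventually_const_lt hval
    exact eventually_nhdsWithin_iff.1 hev
  -- eventually in the open box
  have hU : ∀ᶠ p' : ℝ × ℝ × ℝ in 𝓝 (t₀, x₀, y₀),
      p' ∈ (Set.Ioo 0 T ×ˢ (Set.Ioi 0 ×ˢ Set.Ioi (c (-z)))) := by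
    have hopen : IsOpen (Set.Ioo (0:ℝ) T ×ˢ (Set.Ioi (0:ℝ) ×ˢ Set.Ioi (c (-z)))) :=
      isOpen_Ioo.prod (isOpen_Ioi.prod isOpen_Ioi)
    exact hopen.eventually_mem ⟨⟨ht0, htT⟩, hx, hy⟩
  filter_upwards [hGam, hE, hEz, hU] with p' h1 h2 h3 h4
  obtain ⟨⟨ht0', htT'⟩, hx', hy'⟩ := h4
  refine ⟨⟨ht0', htT'⟩, hx', hy', ?_⟩
  rw [SopE]
  rw [Finset.sup_lt_iff (by exact EReal.bot_lt_coe _)]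
  intro z'' hz''
  obtain ⟨hKmem, hne, hcost'⟩ := Finset.mem_filter.1 hz''
  have hcost₀ : c (z'' - z) + c (-z'') ≤ y₀ := h1 z'' hKmem hcost'
  have hSmem : z'' ∈ S := Finset.mem_filter.2 ⟨hKmem, hne, hcost₀⟩
  have hlt1 : u p'.1 p'.2.1 (p'.2.2 - c (z'' - z)) z'' < θ := by
    refine h2 z'' hSmem ⟨⟨le_of_lt ht0', le_of_lt htT'⟩, le_of_lt hx', by linarith⟩
  have hlt2 : θ < u p'.1 p'.2.1 p'.2.2 z := by
    exact h3 ⟨⟨le_of_lt ht0', le_of_lt htT'⟩, le_of_lt hx', le_of_lt hy'⟩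
  exact_mod_cast lt_trans hlt1 hlt2
end

section
/- Maximum of the perturbed difference lies in the no-action region (Lemma 4.3): let u, v : [0,T] × Ō → ℝ be such that (t,x,y) ↦ u(t,x,y,z) and (t,x,y) ↦ v(t,x,y,z) are continuous for each z ∈ K, and suppose v ≥ Sv pointwise on [0,T] × Ō. Let ρ = ½ min{c(z) : z ∈ K, z ≠ 0}, C₅ = C₄ (max(C₂,C₃) + 1) + 2ρ, g(t,x,y,z) = x + y + C₅(T − t), and for ε > 0 set vᵉ = v + ε g and H = u − vᵉ. Assume the joint sublinear growth condition: for each z ∈ K, sup_{t ∈ [0,T]} (u − v)(t,x,y,z)⁺ / (1 + x + y) → 0 as x + y → ∞ with (x,y,z) ∈ Ō. Then H attains its maximum over [0,T] × Ō at some point (t̂, x̂, ŷ, ẑ), and at any such maximizer one has (u − Su)(t̂, x̂, ŷ, ẑ) > 0. -/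
open scoped Classical

/-- `ρ = ½ min{c(z) : z ∈ K, z ≠ 0}`. -/
noncomputable def rho (C₂ C₃ : ℕ) (c : ℤ → ℝ) : ℝ :=
  (1 / 2) * sInf (c '' {z : ℤ | z ∈ Kset C₂ C₃ ∧ z ≠ 0})

/-- Maximum of the perturbed difference lies in the no-action region (Lemma 4.3):
with `vᵉ = v + εg`, `H = u - vᵉ` attains its maximum over `[0,T] × Ō`, and at any
maximizer `(t̂,x̂,ŷ,ẑ)` one has `(u - Su)(t̂,x̂,ŷ,ẑ) > 0`. -/
theorem max_in_no_action (C₂ C₃ : ℕ) (hC₂ : 0 < C₂) (hC₃ : 0 < C₃)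
    (c : ℤ → ℝ) (hc0 : c 0 = 0) (hcpos : ∀ z : ℤ, z ≠ 0 → 0 < c z)
    (T : ℝ) (hT : 0 < T) (C₄ : ℝ) (hC₄ : 0 < C₄)
    (u v : ℝ → ℝ → ℝ → ℤ → ℝ)
    (hucont : ∀ z ∈ Kset C₂ C₃, ContinuousOn (fun p : ℝ × ℝ × ℝ => u p.1 p.2.1 p.2.2 z)
      {p : ℝ × ℝ × ℝ | p.1 ∈ Set.Icc 0 T ∧ (p.2.1, p.2.2, z) ∈ Obar C₂ C₃ c})
    (hvcont : ∀ z ∈ Kset C₂ C₃, ContinuousOn (fun p : ℝ × ℝ × ℝ => v p.1 p.2.1 p.2.2 z)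
      {p : ℝ × ℝ × ℝ | p.1 ∈ Set.Icc 0 T ∧ (p.2.1, p.2.2, z) ∈ Obar C₂ C₃ c})
    (hvS : ∀ t x y : ℝ, ∀ z : ℤ, t ∈ Set.Icc 0 T → (x, y, z) ∈ Obar C₂ C₃ c →
      SopE C₂ C₃ c v t x y z ≤ ((v t x y z : ℝ) : EReal))
    (hgrowth : ∀ z ∈ Kset C₂ C₃, ∀ δ : ℝ, 0 < δ → ∃ M : ℝ, ∀ t x y : ℝ,
      t ∈ Set.Icc 0 T → (x, y, z) ∈ Obar C₂ C₃ c → M ≤ x + y →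
      max (u t x y z - v t x y z) 0 ≤ δ * (1 + x + y))
    (C₅ : ℝ) (hC₅ : C₅ = C₄ * (max (C₂ : ℝ) (C₃ : ℝ) + 1) + 2 * rho C₂ C₃ c)
    (ε : ℝ) (hε : 0 < ε)
    (H : ℝ → ℝ → ℝ → ℤ → ℝ)
    (hH : ∀ t x y : ℝ, ∀ z : ℤ,
      H t x y z = u t x y z - (v t x y z + ε * (x + y + C₅ * (T - t)))) :
    (∃ th xh yh : ℝ, ∃ zh : ℤ, th ∈ Set.Icc 0 T ∧ (xh, yh, zh) ∈ Obar C₂ C₃ c ∧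
      ∀ t x y : ℝ, ∀ z : ℤ, t ∈ Set.Icc 0 T → (x, y, z) ∈ Obar C₂ C₃ c →
        H t x y z ≤ H th xh yh zh) ∧
    (∀ th xh yh : ℝ, ∀ zh : ℤ, th ∈ Set.Icc 0 T → (xh, yh, zh) ∈ Obar C₂ C₃ c →
      (∀ t x y : ℝ, ∀ z : ℤ, t ∈ Set.Icc 0 T → (x, y, z) ∈ Obar C₂ C₃ c →
        H t x y z ≤ H th xh yh zh) →
      SopE C₂ C₃ c u th xh yh zh < ((u th xh yh zh : ℝ) : EReal)) := by
  -- basic facts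
  have hcnn : ∀ z : ℤ, 0 ≤ c z := by
    intro z
    rcases eq_or_ne z 0 with h | h
    · simp [h, hc0]
    · exact (hcpos z h).le
  have hzK : (0 : ℤ) ∈ Kset C₂ C₃ := by
    simp only [Kset, Finset.mem_Icc]
    omega
  have hC₅nn : 0 ≤ C₅ := by
    have hρ : 0 ≤ rho C₂ C₃ c := by
      have : 0 ≤ sInf (c '' {z : ℤ | z ∈ Kset C₂ C₃ ∧ z ≠ 0}) := by
        apply Real.sInf_nonneg
        rintro x ⟨z, hz, rfl⟩
        exact hcnn z
      unfold rho
      linarith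
    have h1 : (0 : ℝ) ≤ max (C₂ : ℝ) (C₃ : ℝ) := le_max_of_le_left (Nat.cast_nonneg _)
    nlinarith
  -- Part 2 : at any maximizer, Su < u
  have part2 : ∀ th xh yh : ℝ, ∀ zh : ℤ, th ∈ Set.Icc 0 T → (xh, yh, zh) ∈ Obar C₂ C₃ c →
      (∀ t x y : ℝ, ∀ z : ℤ, t ∈ Set.Icc 0 T → (x, y, z) ∈ Obar C₂ C₃ c →
        H t x y z ≤ H th xh yh zh) →
      SopE C₂ C₃ c u th xh yh zh < ((u th xh yh zh : ℝ) : EReal) := by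
    intro th xh yh zh hth hO hmax
    rw [SopE]
    rw [Finset.sup_lt_iff (by exact EReal.bot_lt_coe _)]
    intro z' hz'
    rw [Gamma, Finset.mem_filter] at hz'
    obtain ⟨hz'K, hne, hcost⟩ := hz'
    have hcz' : 0 ≤ c (-z') := hcnn _
    have hc' : 0 < c (z' - zh) := hcpos _ (sub_ne_zero.mpr hne)
    have hO' : (xh, yh - c (z' - zh), z') ∈ Obar C₂ C₃ c := by
      refine ⟨hO.1, ?_, hz'K⟩
      simp only
      linarith
    have h1 := hmax th xh (yh - c (z' - zh)) z' hth hO'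
    rw [hH, hH] at h1
    have h2 : v th xh (yh - c (z' - zh)) z' ≤ v th xh yh zh := by
      have hmem : z' ∈ Gamma C₂ C₃ c yh zh := by
        rw [Gamma, Finset.mem_filter]
        exact ⟨hz'K, hne, hcost⟩
      have hle : ((v th xh (yh - c (z' - zh)) z' : ℝ) : EReal) ≤
          SopE C₂ C₃ c v th xh yh zh :=
        Finset.le_sup (f := fun z'' => ((v th xh (yh - c (z'' - zh)) z'' : ℝ) : EReal)) hmem
      have := hle.trans (hvS th xh yh zh hth hO)
      exact_mod_cast this
    have hεc : 0 < ε * c (z' - zh) := mul_pos hε hc'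
    have e : ε * (xh + (yh - c (z' - zh)) + C₅ * (T - th)) =
        ε * (xh + yh + C₅ * (T - th)) - ε * c (z' - zh) := by ring
    have : u th xh (yh - c (z' - zh)) z' < u th xh yh zh := by linarith
    exact_mod_cast this
  refine ⟨?_, part2⟩
  -- Part 1 : existence of a maximizer
  have hO₀ : ((0 : ℝ), (0 : ℝ), (0 : ℤ)) ∈ Obar C₂ C₃ c := by
    refine ⟨le_refl 0, ?_, hzK⟩
    simp [hc0]
  have ht₀ : (0 : ℝ) ∈ Set.Icc 0 T := ⟨le_refl 0, hT.le⟩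
  -- growth with δ = ε/2, chosen uniformly
  have hgrowth' : ∀ z : ℤ, ∃ M : ℝ, ∀ t x y : ℝ, z ∈ Kset C₂ C₃ →
      t ∈ Set.Icc 0 T → (x, y, z) ∈ Obar C₂ C₃ c → M ≤ x + y →
      max (u t x y z - v t x y z) 0 ≤ (ε / 2) * (1 + x + y) := by
    intro z
    by_cases hz : z ∈ Kset C₂ C₃
    · obtain ⟨M, hM⟩ := hgrowth z hz (ε / 2) (half_pos hε)
      exact ⟨M, fun t x y _ => hM t x y⟩
    · exact ⟨0, fun t x y hz' => absurd hz' hz⟩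
  choose Mz hMz using hgrowth'
  have Kne : (Kset C₂ C₃).Nonempty := ⟨0, hzK⟩
  set H₀ : ℝ := H 0 0 0 0 with hH₀
  set M : ℝ := max (max ((Kset C₂ C₃).sup' Kne Mz)
      ((Kset C₂ C₃).sup' Kne fun z => c (-z))) (max 0 (1 - 2 * H₀ / ε)) with hMdef
  have hM0 : 0 ≤ M := le_trans (le_max_left _ _) (le_max_right _ _)
  have hMc : ∀ z ∈ Kset C₂ C₃, c (-z) ≤ M := fun z hz =>
    le_trans (Finset.le_sup' (fun z => c (-z)) hz) (le_trans (le_max_right _ _) (le_max_left _ _))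
  have hMM : ∀ z ∈ Kset C₂ C₃, Mz z ≤ M := fun z hz =>
    le_trans (Finset.le_sup' Mz hz) (le_trans (le_max_left _ _) (le_max_left _ _))
  have hMD : 1 - 2 * H₀ / ε ≤ M := le_trans (le_max_right _ _) (le_max_right _ _)
  -- far away, H is below H₀
  have hfar : ∀ t x y : ℝ, ∀ z : ℤ, t ∈ Set.Icc 0 T → (x, y, z) ∈ Obar C₂ C₃ c →
      M ≤ x + y → H t x y z ≤ H₀ := by
    intro t x y z ht hO hxy
    have hzK' : z ∈ Kset C₂ C₃ := hO.2.2
    have hb := hMz z t x y hzK' ht hO ((hMM z hzK').trans hxy)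
    have huv : u t x y z - v t x y z ≤ ε / 2 * (1 + x + y) :=
      le_trans (le_max_left _ _) hb
    have ht2 : 0 ≤ T - t := by have := ht.2; linarith
    have hCT : 0 ≤ ε * (C₅ * (T - t)) := mul_nonneg hε.le (mul_nonneg hC₅nn ht2)
    have hMxy : 1 - 2 * H₀ / ε ≤ x + y := hMD.trans hxy
    have h3 : ε / 2 * (1 - 2 * H₀ / ε) ≤ ε / 2 * (x + y) :=
      mul_le_mul_of_nonneg_left hMxy (by linarith)
    have heq : ε / 2 * (1 - 2 * H₀ / ε) = ε / 2 - H₀ := by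
      field_simp
    have e1 : ε * (x + y + C₅ * (T - t)) = 2 * (ε / 2 * (x + y)) + ε * (C₅ * (T - t)) := by
      ring
    have e2 : ε / 2 * (1 + x + y) = ε / 2 + ε / 2 * (x + y) := by ring
    rw [hH]
    linarith
  -- per-z maximizer on the truncated (compact) region
  have key : ∀ z : ℤ, ∃ t x y : ℝ, z ∈ Kset C₂ C₃ →
      (t ∈ Set.Icc 0 T ∧ (x, y, z) ∈ Obar C₂ C₃ c ∧
        ∀ t' x' y' : ℝ, t' ∈ Set.Icc 0 T → (x', y', z) ∈ Obar C₂ C₃ c →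
          x' + y' ≤ M → H t' x' y' z ≤ H t x y z) := by
    intro z
    by_cases hz : z ∈ Kset C₂ C₃
    · set S : Set (ℝ × ℝ × ℝ) := {p | p.1 ∈ Set.Icc 0 T ∧
        (p.2.1, p.2.2, z) ∈ Obar C₂ C₃ c ∧ p.2.1 + p.2.2 ≤ M} with hSdef
      have hcz : 0 ≤ c (-z) := hcnn _
      have hsub : S ⊆ Set.Icc 0 T ×ˢ (Set.Icc 0 M ×ˢ Set.Icc (c (-z)) M) := by
        rintro ⟨t, x, y⟩ ⟨ht, ⟨hx, hy, _⟩, hxy⟩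
        simp only at hx hy hxy
        refine ⟨ht, ⟨hx, ?_⟩, ⟨hy, ?_⟩⟩ <;> · simp only; linarith
      have hclosed : IsClosed S := by
        have h1 : IsClosed {p : ℝ × ℝ × ℝ | p.1 ∈ Set.Icc 0 T} :=
          isClosed_Icc.preimage continuous_fst
        have h2 : IsClosed {p : ℝ × ℝ × ℝ | 0 ≤ p.2.1} :=
          isClosed_le continuous_const (continuous_fst.comp continuous_snd)
        have h3 : IsClosed {p : ℝ × ℝ × ℝ | c (-z) ≤ p.2.2} :=
          isClosed_le continuous_const (continuous_snd.comp continuous_snd)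
        have h4 : IsClosed {p : ℝ × ℝ × ℝ | p.2.1 + p.2.2 ≤ M} :=
          isClosed_le (by fun_prop) continuous_const
        have hSeq : S = ({p : ℝ × ℝ × ℝ | p.1 ∈ Set.Icc 0 T} ∩
            {p : ℝ × ℝ × ℝ | 0 ≤ p.2.1} ∩ {p : ℝ × ℝ × ℝ | c (-z) ≤ p.2.2} ∩
            {p : ℝ × ℝ × ℝ | p.2.1 + p.2.2 ≤ M}) := by
          ext p
          simp only [hSdef, Obar, Set.mem_setOf_eq, Set.mem_inter_iff]
          tauto
        rw [hSeq]
        exact ((h1.inter h2).inter h3).inter h4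
      have hcomp : IsCompact S :=
        (isCompact_Icc.prod (isCompact_Icc.prod isCompact_Icc)).of_isClosed_subset
          hclosed hsub
      have hSne : S.Nonempty := by
        refine ⟨(0, 0, c (-z)), ht₀, ⟨le_refl 0, le_refl _, hz⟩, ?_⟩
        simp only
        have := hMc z hz
        linarith
      have hHcont : ContinuousOn (fun p : ℝ × ℝ × ℝ => H p.1 p.2.1 p.2.2 z) S := by
        have hfe : (fun p : ℝ × ℝ × ℝ => H p.1 p.2.1 p.2.2 z) =
            fun p : ℝ × ℝ × ℝ => u p.1 p.2.1 p.2.2 z -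
              (v p.1 p.2.1 p.2.2 z + ε * (p.2.1 + p.2.2 + C₅ * (T - p.1))) :=
          funext fun p => hH p.1 p.2.1 p.2.2 z
        rw [hfe]
        have hcontg : Continuous fun p : ℝ × ℝ × ℝ =>
            ε * (p.2.1 + p.2.2 + C₅ * (T - p.1)) := by fun_prop
        have hsub' : S ⊆ {p : ℝ × ℝ × ℝ | p.1 ∈ Set.Icc 0 T ∧
            (p.2.1, p.2.2, z) ∈ Obar C₂ C₃ c} := fun p hp => ⟨hp.1, hp.2.1⟩
        exact (((hucont z hz).mono hsub').sub
          (((hvcont z hz).mono hsub').add (hcontg.continuousOn)))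
      obtain ⟨p, hpS, hpmax⟩ := hcomp.exists_isMaxOn hSne hHcont
      refine ⟨p.1, p.2.1, p.2.2, fun _ => ⟨hpS.1, hpS.2.1, ?_⟩⟩
      intro t' x' y' ht' hO' hxy'
      exact hpmax (show ((t', x', y') : ℝ × ℝ × ℝ) ∈ S from ⟨ht', hO', hxy'⟩)
    · exact ⟨0, 0, 0, fun hz' => absurd hz' hz⟩
  choose tz xz yz hkey using key
  obtain ⟨zm, hzm, hzmmax⟩ := (Kset C₂ C₃).exists_max_image
    (fun z => H (tz z) (xz z) (yz z) z) Kne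
  obtain ⟨htm, hOm, hmaxm⟩ := hkey zm hzm
  refine ⟨tz zm, xz zm, yz zm, zm, htm, hOm, ?_⟩
  intro t x y z ht hO
  have hzK' : z ∈ Kset C₂ C₃ := hO.2.2
  obtain ⟨htz, hOz, hmaxz⟩ := hkey z hzK'
  by_cases hxy : x + y ≤ M
  · exact le_trans (hmaxz t x y ht hO hxy) (hzmmax z hzK')
  · have h1 : H t x y z ≤ H₀ := hfar t x y z ht hO (le_of_not_ge hxy)
    obtain ⟨ht0', hO0', hmax0⟩ := hkey 0 hzK
    have h2 : H₀ ≤ H (tz 0) (xz 0) (yz 0) 0 := by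
      rw [hH₀]
      exact hmax0 0 0 0 ht₀ hO₀ (by linarith)
    exact le_trans h1 (le_trans h2 (hzmmax 0 hzK))
end
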